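/- Let N be a positive natural number, Ĵ, Ĝ ∈ ℝᴺˣᴺ constant matrices with Ĵ skew-symmetric and Ĝ symmetric positive semi-definite, and H, S : ℝᴺ → ℝ continuously differentiable. Assume the mutual degeneracy conditions Ĝ ∇H(y) = 0 and Ĵ ∇S(y) = 0 for every y ∈ ℝᴺ. Let Δt > 0 and suppose a⁰, a¹ ∈ ℝᴺ satisfy the Average Vector Field step a¹ − a⁰ = Δt · ∫₀¹ (Ĵ ∇H + Ĝ ∇S)((1−ξ) a⁰ + ξ a¹) dξ. Then H(a¹) = H(a⁰) and S(a¹) ≥ S(a⁰). (The AVF scheme with constant matrices is a metriplectic time integrator.) -/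

import Mathlib

open Matrix

open Matrix MeasureTheory InnerProductSpace

/-- dot product with a fixed right vector, as a continuous linear map on `Fin N → ℝ`. -/
noncomputable def dotCLM {N : ℕ} (w : Fin N → ℝ) : (Fin N → ℝ) →L[ℝ] ℝ :=
  LinearMap.toContinuousLinearMap
    { toFun := fun x => dotProduct x w
      map_add' := fun x y => add_dotProduct x y w
      map_smul' := fun c x => smul_dotProduct c x w }

/-- identity between `EuclideanSpace` and the plain pi type. -/
def toPi {N : ℕ} (x : EuclideanSpace ℝ (Fin N)) : Fin N → ℝ := x

@[simp] lemma dotCLM_apply {N : ℕ} (w x : Fin N → ℝ) : dotCLM w x = x ⬝ᵥ w := rfl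

lemma inner_pi {N : ℕ} (x : EuclideanSpace ℝ (Fin N)) (y : Fin N → ℝ) :
    (inner ℝ x (WithLp.toLp 2 y : EuclideanSpace ℝ (Fin N)) : ℝ) = dotProduct (x : Fin N → ℝ) y := by
  simp [PiLp.inner_apply, dotProduct, mul_comm]

lemma line_int {N : ℕ} (H : EuclideanSpace ℝ (Fin N) → ℝ) (hH : ContDiff ℝ 1 H)
    (a0 a1 : EuclideanSpace ℝ (Fin N)) :
    H a1 - H a0 = ∫ ξ in (0:ℝ)..1,
      (inner ℝ (gradient H ((1 - ξ) • a0 + ξ • a1)) (a1 - a0) : ℝ) := by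
  have hγ : ∀ ξ : ℝ, HasDerivAt (fun t : ℝ => ((1 - t) • a0 + t • a1 : EuclideanSpace ℝ (Fin N)))
      (a1 - a0) ξ := by
    intro ξ
    have h1 : HasDerivAt (fun t : ℝ => (1 - t)) (-1) ξ := (hasDerivAt_id ξ).const_sub 1
    have h2 := (h1.smul_const a0).add ((hasDerivAt_id ξ).smul_const a1)
    have h3 : (a1 - a0 : EuclideanSpace ℝ (Fin N)) = (-1 : ℝ) • a0 + (1 : ℝ) • a1 := by
      simp only [neg_smul, one_smul]
      exact sub_eq_neg_add a1 a0
    rw [h3]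
    exact h2
  have hgc : Continuous (fun x : EuclideanSpace ℝ (Fin N) => gradient H x) :=
    (InnerProductSpace.toDual ℝ _).symm.continuous.comp (hH.continuous_fderiv one_ne_zero)
  have hγc : Continuous (fun ξ : ℝ => ((1 - ξ) • a0 + ξ • a1 : EuclideanSpace ℝ (Fin N))) := by
    fun_prop
  have hder : ∀ ξ : ℝ, HasDerivAt (fun t : ℝ => H ((1 - t) • a0 + t • a1))
      (inner ℝ (gradient H ((1 - ξ) • a0 + ξ • a1)) (a1 - a0) : ℝ) ξ := by
    intro ξ
    have hd := (hH.differentiable one_ne_zero ((1 - ξ) • a0 + ξ • a1)).hasGradientAt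
    have := (hasGradientAt_iff_hasFDerivAt.mp hd).comp_hasDerivAt ξ (hγ ξ)
    simpa [InnerProductSpace.toDual_apply_apply, Function.comp_def] using this
  have hint : IntervalIntegrable (fun ξ : ℝ =>
      (inner ℝ (gradient H ((1 - ξ) • a0 + ξ • a1)) (a1 - a0) : ℝ)) volume 0 1 :=
    ((hgc.comp hγc).inner continuous_const).intervalIntegrable 0 1
  have := intervalIntegral.integral_eq_sub_of_hasDerivAt
    (f := fun t : ℝ => H ((1 - t) • a0 + t • a1))
    (f' := fun ξ => (inner ℝ (gradient H ((1 - ξ) • a0 + ξ • a1)) (a1 - a0) : ℝ))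
    (fun ξ _ => hder ξ) hint
  simpa using this.symm


/-- Let `Ĵ` be a constant skew-symmetric matrix and `Ĝ` a constant symmetric
positive semi-definite matrix, `H, S` continuously differentiable, satisfying the mutual
degeneracy conditions `Ĝ∇H(y) = 0` and `Ĵ∇S(y) = 0` for every `y`. If `Δt > 0` and `a⁰, a¹`
satisfy the Average Vector Field step
`a¹ − a⁰ = Δt ∫₀¹ (Ĵ∇H + Ĝ∇S)((1−ξ)a⁰ + ξa¹) dξ`, then `H(a¹) = H(a⁰)` and `S(a¹) ≥ S(a⁰)`:
the AVF scheme with constant matrices is a metriplectic time integrator. -/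
theorem stmt_16 (N : ℕ) (hN : 0 < N)
    (Jh Gh : Matrix (Fin N) (Fin N) ℝ) (hJskew : Jhᵀ = -Jh) (hGpsd : Gh.PosSemidef)
    (H S : EuclideanSpace ℝ (Fin N) → ℝ) (hH : ContDiff ℝ 1 H) (hS : ContDiff ℝ 1 S)
    (hdeg1 : ∀ y : EuclideanSpace ℝ (Fin N),
      Gh.mulVec (gradient H y : EuclideanSpace ℝ (Fin N)) = 0)
    (hdeg2 : ∀ y : EuclideanSpace ℝ (Fin N),
      Jh.mulVec (gradient S y : EuclideanSpace ℝ (Fin N)) = 0)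
    (Δt : ℝ) (hΔt : 0 < Δt) (a0 a1 : EuclideanSpace ℝ (Fin N))
    (hstep : a1 - a0 = Δt • ∫ ξ in (0:ℝ)..1,
      (WithLp.toLp 2 (Jh.mulVec (gradient H ((1 - ξ) • a0 + ξ • a1) : EuclideanSpace ℝ (Fin N)) +
        Gh.mulVec (gradient S ((1 - ξ) • a0 + ξ • a1) : EuclideanSpace ℝ (Fin N))) :
          EuclideanSpace ℝ (Fin N))) :
    H a1 = H a0 ∧ S a0 ≤ S a1 := by
  have hγc : Continuous (fun ξ : ℝ => ((1 - ξ) • a0 + ξ • a1 : EuclideanSpace ℝ (Fin N))) := by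
    fun_prop
  have hgHcE : Continuous (fun x : EuclideanSpace ℝ (Fin N) => gradient H x) :=
    (InnerProductSpace.toDual ℝ _).symm.continuous.comp (hH.continuous_fderiv one_ne_zero)
  have hgScE : Continuous (fun x : EuclideanSpace ℝ (Fin N) => gradient S x) :=
    (InnerProductSpace.toDual ℝ _).symm.continuous.comp (hS.continuous_fderiv one_ne_zero)
  -- everything vector-valued now lives in `Fin N → ℝ` with the Pi norm,
  -- matching the elaboration of `hstep`.
  have hgHc : Continuous (fun ξ : ℝ =>
      toPi (gradient H ((1 - ξ) • a0 + ξ • a1))) :=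
    (PiLp.continuous_ofLp 2 (fun _ : Fin N => ℝ)).comp (hgHcE.comp hγc)
  have hgSc : Continuous (fun ξ : ℝ =>
      toPi (gradient S ((1 - ξ) • a0 + ξ • a1))) :=
    (PiLp.continuous_ofLp 2 (fun _ : Fin N => ℝ)).comp (hgScE.comp hγc)
  have intH : IntervalIntegrable (fun ξ : ℝ =>
      toPi (gradient H ((1 - ξ) • a0 + ξ • a1))) volume 0 1 :=
    hgHc.intervalIntegrable 0 1
  have intS : IntervalIntegrable (fun ξ : ℝ =>
      toPi (gradient S ((1 - ξ) • a0 + ξ • a1))) volume 0 1 :=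
    hgSc.intervalIntegrable 0 1
  set w : Fin N → ℝ := ∫ ξ in (0:ℝ)..1,
      (Jh.mulVec (gradient H ((1 - ξ) • a0 + ξ • a1) : EuclideanSpace ℝ (Fin N)) +
        Gh.mulVec (gradient S ((1 - ξ) • a0 + ξ • a1) : EuclideanSpace ℝ (Fin N))) with hwdef
  have hstep' : a1 - a0 = WithLp.toLp 2 (Δt • w : Fin N → ℝ) := by
    have intW : IntervalIntegrable (fun ξ : ℝ =>
        (Jh.mulVec (gradient H ((1 - ξ) • a0 + ξ • a1) : EuclideanSpace ℝ (Fin N)) +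
          Gh.mulVec (gradient S ((1 - ξ) • a0 + ξ • a1) : EuclideanSpace ℝ (Fin N)))) volume 0 1 :=
      ((((LinearMap.toContinuousLinearMap (Matrix.mulVecLin Jh)).continuous.comp hgHc).add
        ((LinearMap.toContinuousLinearMap (Matrix.mulVecLin Gh)).continuous.comp hgSc)).intervalIntegrable 0 1)
    have h := (PiLp.continuousLinearEquiv 2 ℝ (fun _ : Fin N => ℝ)).symm.toContinuousLinearMap.intervalIntegral_comp_comm intW
    simp only [ContinuousLinearEquiv.coe_coe, PiLp.coe_symm_continuousLinearEquiv] at h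
    rw [hstep, h]
    rfl
  set gH : Fin N → ℝ := ∫ ξ in (0:ℝ)..1,
      toPi (gradient H ((1 - ξ) • a0 + ξ • a1)) with hgHdef
  set gS : Fin N → ℝ := ∫ ξ in (0:ℝ)..1,
      toPi (gradient S ((1 - ξ) • a0 + ξ • a1)) with hgSdef
  -- matrices as continuous linear maps on the Pi space
  set Jc := LinearMap.toContinuousLinearMap (Matrix.mulVecLin Jh) with hJcdef
  set Gc := LinearMap.toContinuousLinearMap (Matrix.mulVecLin Gh) with hGcdef
  have intJH : IntervalIntegrable (fun ξ : ℝ =>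
      Jc (toPi (gradient H ((1 - ξ) • a0 + ξ • a1)))) volume 0 1 :=
    (Jc.continuous.comp hgHc).intervalIntegrable 0 1
  have intGS : IntervalIntegrable (fun ξ : ℝ =>
      Gc (toPi (gradient S ((1 - ξ) • a0 + ξ • a1)))) volume 0 1 :=
    (Gc.continuous.comp hgSc).intervalIntegrable 0 1
  have hw : w = Jh *ᵥ gH + Gh *ᵥ gS := by
    have h1 : w = ∫ ξ in (0:ℝ)..1,
        (Jc (toPi (gradient H ((1 - ξ) • a0 + ξ • a1))) +
          Gc (toPi (gradient S ((1 - ξ) • a0 + ξ • a1)))) := rfl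
    rw [h1, intervalIntegral.integral_add intJH intGS,
      Jc.intervalIntegral_comp_comm intH, Gc.intervalIntegral_comp_comm intS]
    rfl
  have hGgH : Gh *ᵥ gH = 0 := by
    have : Gc gH = 0 := by
      rw [← Gc.intervalIntegral_comp_comm intH]
      have hz : ∀ ξ : ℝ,
          Gc (toPi (gradient H ((1 - ξ) • a0 + ξ • a1))) = 0 :=
        fun ξ => hdeg1 ((1 - ξ) • a0 + ξ • a1)
      simp [hz]
    exact this
  have hJgS : Jh *ᵥ gS = 0 := by
    have : Jc gS = 0 := by
      rw [← Jc.intervalIntegral_comp_comm intS]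
      have hz : ∀ ξ : ℝ,
          Jc (toPi (gradient S ((1 - ξ) • a0 + ξ • a1))) = 0 :=
        fun ξ => hdeg2 ((1 - ξ) • a0 + ξ • a1)
      simp [hz]
    exact this
  -- the master computation
  have key : ∀ (F : EuclideanSpace ℝ (Fin N) → ℝ), ContDiff ℝ 1 F →
      F a1 - F a0 = Δt * ((∫ ξ in (0:ℝ)..1,
        toPi (gradient F ((1 - ξ) • a0 + ξ • a1))) ⬝ᵥ w) := by
    intro F hF
    have hgFcE : Continuous (fun x : EuclideanSpace ℝ (Fin N) => gradient F x) :=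
      (InnerProductSpace.toDual ℝ _).symm.continuous.comp (hF.continuous_fderiv one_ne_zero)
    have hgFc : Continuous (fun ξ : ℝ =>
        toPi (gradient F ((1 - ξ) • a0 + ξ • a1))) :=
      (PiLp.continuous_ofLp 2 (fun _ : Fin N => ℝ)).comp (hgFcE.comp hγc)
    have intF : IntervalIntegrable (fun ξ : ℝ =>
        toPi (gradient F ((1 - ξ) • a0 + ξ • a1))) volume 0 1 :=
      hgFc.intervalIntegrable 0 1
    have hline := line_int F hF a0 a1
    rw [hstep'] at hline
    rw [hline]
    calc (∫ ξ in (0:ℝ)..1,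
          (inner ℝ (gradient F ((1 - ξ) • a0 + ξ • a1)) (WithLp.toLp 2 (Δt • w : Fin N → ℝ) :
            EuclideanSpace ℝ (Fin N)) : ℝ))
        = ∫ ξ in (0:ℝ)..1,
            Δt * (dotCLM w (toPi (gradient F ((1 - ξ) • a0 + ξ • a1)))) := by
          apply intervalIntegral.integral_congr
          intro ξ _
          simp only [dotCLM_apply]
          rw [show (Δt • w : Fin N → ℝ) = ((Δt • w : Fin N → ℝ) : Fin N → ℝ) from rfl]
          rw [inner_pi (gradient F ((1 - ξ) • a0 + ξ • a1)) (Δt • w),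
            dotProduct_smul, smul_eq_mul]
          rfl
      _ = Δt * ∫ ξ in (0:ℝ)..1,
            dotCLM w (toPi (gradient F ((1 - ξ) • a0 + ξ • a1))) :=
          intervalIntegral.integral_const_mul _ _
      _ = Δt * dotCLM w (∫ ξ in (0:ℝ)..1,
            toPi (gradient F ((1 - ξ) • a0 + ξ • a1))) := by
          rw [(dotCLM w).intervalIntegral_comp_comm intF]
      _ = Δt * ((∫ ξ in (0:ℝ)..1,
            toPi (gradient F ((1 - ξ) • a0 + ξ • a1))) ⬝ᵥ w) := by
          rw [dotCLM_apply]
  have hHkey := key H hH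
  have hSkey := key S hS
  rw [← hgHdef] at hHkey
  rw [← hgSdef] at hSkey
  -- skew term vanishes
  have hskew : ∀ x : Fin N → ℝ, x ⬝ᵥ (Jh *ᵥ x) = 0 := by
    intro x
    have h1 : x ⬝ᵥ (Jh *ᵥ x) = (Jhᵀ *ᵥ x) ⬝ᵥ x := by
      rw [Matrix.dotProduct_mulVec, ← Matrix.mulVec_transpose]
    rw [hJskew, Matrix.neg_mulVec, neg_dotProduct] at h1
    have h2 := dotProduct_comm x (Jh *ᵥ x)
    linarith
  have hGsym : Ghᵀ = Gh := by
    have := hGpsd.1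
    rwa [Matrix.IsHermitian, Matrix.conjTranspose_eq_transpose_of_trivial] at this
  constructor
  · have hz : gH ⬝ᵥ w = 0 := by
      rw [hw, dotProduct_add, hskew, Matrix.dotProduct_mulVec,
        ← Matrix.mulVec_transpose, hGsym, hGgH, zero_dotProduct]
      ring
    rw [hz, mul_zero] at hHkey
    linarith
  · have hz : gS ⬝ᵥ w = gS ⬝ᵥ (Gh *ᵥ gS) := by
      rw [hw, dotProduct_add, Matrix.dotProduct_mulVec,
        ← Matrix.mulVec_transpose, hJskew, Matrix.neg_mulVec, hJgS,
        neg_dotProduct, zero_dotProduct]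
      ring
    have hpos : 0 ≤ gS ⬝ᵥ (Gh *ᵥ gS) := by
      simpa using hGpsd.dotProduct_mulVec_nonneg gS
    rw [hz] at hSkey
    nlinarith
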